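/- Let n ≥ 4, and let ζ ∈ T_n be the idempotent of rank n−1 with ζ(2) = 1 and ζ(i) = i for all i ≠ 2. If u, v are products of the form u = u₁ · ζ · u₂ and v = v₁ · ζ · v₂ in T_n, where u₁, v₁ ∈ S_n are permutations and u₂, v₂ ∈ T_n are arbitrary, u = v, and both u and v have rank n − 1, then u₁⁻¹ · v₁ stabilizes the set {1, 2} setwise. -/

import Mathlib

/-- The full transformation monoid `T_n` on `{1, ..., n}` is modelled by functions
`Fin (n+1) → Fin (n+1)` fixing the unused point `0` and mapping nonzero points to
nonzero points; composition is left-to-right. -/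
def IsTn (n : ℕ) (f : Fin (n + 1) → Fin (n + 1)) : Prop :=
  f 0 = 0 ∧ ∀ x : Fin (n + 1), x ≠ 0 → f x ≠ 0

/-- The rank of a transformation: the number of nonzero points in its image. -/
def prank (n : ℕ) (f : Fin (n + 1) → Fin (n + 1)) : ℕ :=
  ((Finset.univ.image f).erase 0).card

/-- The idempotent `ζ ∈ T_n` of rank `n - 1` with `ζ(2) = 1` and `ζ(i) = i` otherwise. -/
def zetaMap (n : ℕ) : Fin (n + 1) → Fin (n + 1) := fun x => if x = 2 then 1 else x

section Aux

variable {n : ℕ}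

lemma fin_ne (hn : 4 ≤ n) : (0 : Fin (n+1)) ≠ 1 ∧ (0 : Fin (n+1)) ≠ 2 ∧ (1 : Fin (n+1)) ≠ 2 := by
  obtain ⟨m, rfl⟩ : ∃ m, n = m + 4 := ⟨n - 4, by omega⟩
  refine ⟨?_, ?_, ?_⟩ <;> · simp [Fin.ext_iff, Nat.mod_eq_of_lt (show 2 < m + 4 + 1 by omega)]

lemma zeta_collapse (hn : 4 ≤ n) {x y : Fin (n+1)} (h : zetaMap n x = zetaMap n y)
    (hxy : x ≠ y) : (x = 1 ∧ y = 2) ∨ (x = 2 ∧ y = 1) := by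
  obtain ⟨h01, h02, h12⟩ := fin_ne hn
  unfold zetaMap at h
  split_ifs at h with h1 h2 h2
  · exact absurd (h1.trans h2.symm) hxy
  · exact Or.inr ⟨h1, h.symm⟩
  · exact Or.inl ⟨h, h2⟩
  · exact absurd h hxy

lemma zeta_mem (hn : 4 ≤ n) {z : Fin (n+1)} (hz : z ≠ 0) :
    zetaMap n z ≠ 0 ∧ zetaMap n z ≠ 2 := by
  obtain ⟨h01, h02, h12⟩ := fin_ne hn
  unfold zetaMap
  split_ifs with h1
  · exact ⟨fun h => h01 h.symm, h12⟩
  · exact ⟨hz, h1⟩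

lemma zeta_zero (hn : 4 ≤ n) : zetaMap n (0 : Fin (n+1)) = 0 := by
  obtain ⟨h01, h02, h12⟩ := fin_ne hn
  unfold zetaMap
  rw [if_neg h02]

lemma injOn_of_rank (hn : 4 ≤ n) (w₁ : Equiv.Perm (Fin (n+1))) (hw₁ : w₁ 0 = 0)
    (w₂ : Fin (n+1) → Fin (n+1)) (hw₂ : IsTn n w₂)
    (hr : prank n (fun x => w₂ (zetaMap n (w₁ x))) = n - 1) :
    Set.InjOn w₂ {z : Fin (n+1) | z ≠ 0 ∧ z ≠ 2} := by
  obtain ⟨h01, h02, h12⟩ := fin_ne hn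
  set S : Finset (Fin (n+1)) := Finset.univ.filter (fun z => z ≠ 0 ∧ z ≠ 2) with hS
  have hScard : S.card = n - 1 := by
    have hSe : S = (Finset.univ.erase 0).erase 2 := by
      ext z
      simp [hS, and_comm]
    have m2 : (2 : Fin (n+1)) ∈ Finset.univ.erase 0 :=
      Finset.mem_erase.mpr ⟨fun h => h02 h.symm, Finset.mem_univ _⟩
    rw [hSe, Finset.card_erase_of_mem m2, Finset.card_erase_of_mem (Finset.mem_univ 0),
      Finset.card_univ, Fintype.card_fin]
    omega
  have h0T : (0 : Fin (n+1)) ∉ S.image w₂ := by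
    simp only [Finset.mem_image, not_exists, hS, Finset.mem_filter, Finset.mem_univ, true_and,
      not_and]
    rintro z ⟨hz0, -⟩ h
    exact hw₂.2 z hz0 h
  have himg : Finset.univ.image (fun x => w₂ (zetaMap n (w₁ x))) = insert 0 (S.image w₂) := by
    ext y
    simp only [Finset.mem_image, Finset.mem_insert, Finset.mem_univ, true_and, hS,
      Finset.mem_filter]
    constructor
    · rintro ⟨x, rfl⟩
      by_cases hx : x = 0
      · left; subst hx; rw [hw₁, zeta_zero hn, hw₂.1]
      · right
        have hwx : w₁ x ≠ 0 := by
          rw [← hw₁]; exact fun h => hx (w₁.injective h)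
        exact ⟨zetaMap n (w₁ x), zeta_mem hn hwx, rfl⟩
    · intro h
      rcases h with h | ⟨z, ⟨hz0, hz2⟩, rfl⟩
      · refine ⟨0, ?_⟩
        rw [hw₁, zeta_zero hn, hw₂.1, h]
      · refine ⟨w₁.symm z, ?_⟩
        rw [Equiv.apply_symm_apply]
        simp [zetaMap, hz2]
  have hcard : (S.image w₂).card = S.card := by
    have h2 := hr
    rw [prank, himg, Finset.erase_insert h0T] at h2
    rw [h2, hScard]
  have hfin := Finset.injOn_of_card_image_eq hcard
  intro a ha b hb hab
  exact hfin (by simp [hS, ha.1, ha.2]) (by simp [hS, hb.1, hb.2]) hab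

end Aux


/-- If `u = u₁ζu₂` and `v = v₁ζv₂` in `T_n` (products left-to-right) with `u₁, v₁`
permutations, `u = v`, and both have rank `n - 1`, then `u₁⁻¹v₁` stabilizes `{1, 2}`
setwise. -/
theorem stmt9 (n : ℕ) (hn : 4 ≤ n)
    (u₁ v₁ : Equiv.Perm (Fin (n + 1))) (hu₁ : u₁ 0 = 0) (hv₁ : v₁ 0 = 0)
    (u₂ v₂ : Fin (n + 1) → Fin (n + 1)) (hu₂ : IsTn n u₂) (hv₂ : IsTn n v₂)
    (heq : (fun x => u₂ (zetaMap n (u₁ x))) = (fun x => v₂ (zetaMap n (v₁ x))))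
    (hru : prank n (fun x => u₂ (zetaMap n (u₁ x))) = n - 1)
    (hrv : prank n (fun x => v₂ (zetaMap n (v₁ x))) = n - 1) :
    (fun x => v₁ (u₁⁻¹ x)) '' ({1, 2} : Set (Fin (n + 1))) = {1, 2} := by
  obtain ⟨h01, h02, h12⟩ := fin_ne hn
  have hinjv := injOn_of_rank hn v₁ hv₁ v₂ hv₂ hrv
  set a := u₁.symm 1 with ha
  set b := u₁.symm 2 with hb
  have ha0 : a ≠ 0 := by
    intro h; apply h01
    rw [← hu₁, ← h, ha, Equiv.apply_symm_apply]
  have hb0 : b ≠ 0 := by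
    intro h; apply h02
    rw [← hu₁, ← h, hb, Equiv.apply_symm_apply]
  have hva0 : v₁ a ≠ 0 := fun h => ha0 (v₁.injective (h.trans hv₁.symm))
  have hvb0 : v₁ b ≠ 0 := fun h => hb0 (v₁.injective (h.trans hv₁.symm))
  have hab : v₁ a ≠ v₁ b := by
    intro h
    exact h12 (u₁.symm.injective (v₁.injective h : a = b))
  have key : v₂ (zetaMap n (v₁ a)) = v₂ (zetaMap n (v₁ b)) := by
    have hA := congrFun heq a
    have hB := congrFun heq b
    rw [ha, Equiv.apply_symm_apply] at hA
    rw [hb, Equiv.apply_symm_apply] at hB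
    have hz1 : zetaMap n (1 : Fin (n+1)) = 1 := by simp [zetaMap, h12]
    have hz2 : zetaMap n (2 : Fin (n+1)) = 1 := by simp [zetaMap]
    rw [hz1] at hA; rw [hz2] at hB
    rw [← hA, ← hB]
  have hzeq : zetaMap n (v₁ a) = zetaMap n (v₁ b) :=
    hinjv (zeta_mem hn hva0) (zeta_mem hn hvb0) key
  have hcol := zeta_collapse hn hzeq hab
  have himg : (fun x => v₁ (u₁⁻¹ x)) '' ({1, 2} : Set (Fin (n + 1))) = {v₁ a, v₁ b} := by
    rw [Set.image_pair, ha, hb, Equiv.Perm.inv_def]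
  rw [himg]
  rcases hcol with ⟨h1, h2⟩ | ⟨h1, h2⟩
  · rw [h1, h2]
  · rw [h1, h2, Set.pair_comm]
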